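/- (Pullback of the Winslow functional) Let Ω̂, Ω ⊂ ℝ² be bounded open sets and x : Ω̂ → Ω a C¹ diffeomorphism with det J(x)(ξ) > 0 for every ξ ∈ Ω̂, such that ξ ↦ tr(G(ξ))/det J(x)(ξ) is integrable on Ω̂. Then the Dirichlet energy of the inverse map equals the pulled-back Winslow integral: ∫_Ω ‖∂(x⁻¹)/∂p (p)‖_F² dp = ∫_{Ω̂} tr(G(ξ))/det J(x)(ξ) dξ; equivalently, ∫_Ω tr(G⁻¹)(x⁻¹(p)) dp = ∫_{Ω̂} tr(G)/det J dξ, where tr(G⁻¹)(ξ) is the trace of the inverse of the metric tensor G(ξ). -/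

import Mathlib

open MeasureTheory Matrix

/-- The Jacobian matrix of a map `x : ℝ² → ℝ²` at a point. -/
noncomputable def jacMat (x : (Fin 2 → ℝ) → (Fin 2 → ℝ)) (ξ : Fin 2 → ℝ) :
    Matrix (Fin 2) (Fin 2) ℝ :=
  Matrix.of fun i j => fderiv ℝ (fun q => x q i) ξ (Pi.single j 1)

/-- The metric tensor `G = J(x)ᵀ J(x)` of a map at a point. -/
noncomputable def metricG (x : (Fin 2 → ℝ) → (Fin 2 → ℝ)) (ξ : Fin 2 → ℝ) :
    Matrix (Fin 2) (Fin 2) ℝ :=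
  (jacMat x ξ)ᵀ * jacMat x ξ

lemma jacMat_eq_toMatrix' {x : (Fin 2 → ℝ) → (Fin 2 → ℝ)} {ξ : Fin 2 → ℝ}
    (hx : DifferentiableAt ℝ x ξ) :
    jacMat x ξ = LinearMap.toMatrix' (fderiv ℝ x ξ : (Fin 2 → ℝ) →ₗ[ℝ] (Fin 2 → ℝ)) := by
  ext i j
  have h : (fun q => x q i)
      = (ContinuousLinearMap.proj (R := ℝ) (φ := fun _ : Fin 2 => ℝ) i) ∘ x := rfl
  rw [jacMat]
  simp only [Matrix.of_apply]
  rw [h, fderiv_comp ξ (ContinuousLinearMap.proj i).differentiableAt hx,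
    (ContinuousLinearMap.proj (R := ℝ) (φ := fun _ : Fin 2 => ℝ) i).fderiv]
  have hs : (Pi.single j 1 : Fin 2 → ℝ) = fun j' => if j' = j then 1 else 0 := by
    funext k; simp [Pi.single_apply]
  simp [LinearMap.toMatrix'_apply, hs]

lemma matrix_sum_inv_sq {M : Matrix (Fin 2) (Fin 2) ℝ} (hd : M.det ≠ 0) :
    (∑ i : Fin 2, ∑ j : Fin 2, (M⁻¹ i j) ^ 2) = (Mᵀ * M).trace / M.det ^ 2 := by
  rw [Matrix.inv_def, Matrix.adjugate_fin_two, Ring.inverse_eq_inv']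
  simp [Matrix.trace_fin_two, Matrix.mul_apply, Fin.sum_univ_two, Matrix.det_fin_two,
    Matrix.smul_apply]
  field_simp
  ring

lemma matrix_trace_inv {M : Matrix (Fin 2) (Fin 2) ℝ} (hd : M.det ≠ 0) :
    ((Mᵀ * M)⁻¹).trace = (Mᵀ * M).trace / M.det ^ 2 := by
  have hdet : (Mᵀ * M).det = M.det ^ 2 := by
    rw [Matrix.det_mul, Matrix.det_transpose]; ring
  rw [Matrix.inv_def, Matrix.adjugate_fin_two, Ring.inverse_eq_inv', hdet]
  simp [Matrix.trace_fin_two, Matrix.mul_apply, Fin.sum_univ_two, Matrix.det_fin_two,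
    Matrix.smul_apply]
  field_simp
  ring

/-- **Pullback of the Winslow functional.** For an orientation-preserving C¹ diffeomorphism
`x : Ω̂ → Ω`, the Dirichlet energy of the inverse map equals the pulled-back Winslow
integral `∫_{Ω̂} tr(G)/det J dξ`, which also equals `∫_Ω tr(G⁻¹)(x⁻¹(p)) dp`. -/
theorem winslow_pullback
    (Ωhat Ω : Set (Fin 2 → ℝ))
    (hΩhat_open : IsOpen Ωhat) (hΩ_open : IsOpen Ω)
    (hΩhat_bdd : Bornology.IsBounded Ωhat) (hΩ_bdd : Bornology.IsBounded Ω)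
    (x y : (Fin 2 → ℝ) → (Fin 2 → ℝ))
    (hx : ContDiffOn ℝ 1 x Ωhat) (hy : ContDiffOn ℝ 1 y Ω)
    (hbij : Set.BijOn x Ωhat Ω)
    (hinv_left : ∀ ξ ∈ Ωhat, y (x ξ) = ξ) (hinv_right : ∀ p ∈ Ω, x (y p) = p)
    (hdet : ∀ ξ ∈ Ωhat, 0 < (jacMat x ξ).det)
    (hint : IntegrableOn (fun ξ => (metricG x ξ).trace / (jacMat x ξ).det) Ωhat) :
    (∫ p in Ω, ∑ i : Fin 2, ∑ j : Fin 2, (jacMat y p i j) ^ 2)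
        = (∫ ξ in Ωhat, (metricG x ξ).trace / (jacMat x ξ).det)
      ∧ (∫ p in Ω, ((metricG x (y p))⁻¹).trace)
        = (∫ ξ in Ωhat, (metricG x ξ).trace / (jacMat x ξ).det) := by
  -- differentiability
  have hxd : ∀ ξ ∈ Ωhat, DifferentiableAt ℝ x ξ := fun ξ hξ =>
    (hx.differentiableOn one_ne_zero).differentiableAt (hΩhat_open.mem_nhds hξ)
  have hyd : ∀ p ∈ Ω, DifferentiableAt ℝ y p := fun p hp =>
    (hy.differentiableOn one_ne_zero).differentiableAt (hΩ_open.mem_nhds hp)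
  -- chain rule: jacMat y (x ξ) * jacMat x ξ = 1
  have hchain : ∀ ξ ∈ Ωhat, jacMat y (x ξ) * jacMat x ξ = 1 := by
    intro ξ hξ
    have hxΩ : x ξ ∈ Ω := hbij.mapsTo hξ
    have hev : (fun ζ => y (x ζ)) =ᶠ[nhds ξ] id := by
      filter_upwards [hΩhat_open.mem_nhds hξ] with ζ hζ using hinv_left ζ hζ
    have h1 : fderiv ℝ (y ∘ x) ξ = ContinuousLinearMap.id ℝ (Fin 2 → ℝ) := by
      have := Filter.EventuallyEq.fderiv_eq (𝕜 := ℝ) hev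
      rw [Function.comp_def]; simpa [Function.comp, fderiv_id] using this
    have h2 : fderiv ℝ (y ∘ x) ξ = (fderiv ℝ y (x ξ)).comp (fderiv ℝ x ξ) :=
      fderiv_comp ξ (hyd _ hxΩ) (hxd _ hξ)
    have h3 : (fderiv ℝ y (x ξ)).comp (fderiv ℝ x ξ) = ContinuousLinearMap.id ℝ (Fin 2 → ℝ) := by
      rw [← h2, h1]
    rw [jacMat_eq_toMatrix' (hyd _ hxΩ), jacMat_eq_toMatrix' (hxd _ hξ),
      ← LinearMap.toMatrix'_comp]
    have h4 : ((fderiv ℝ y (x ξ)) : (Fin 2 → ℝ) →ₗ[ℝ] (Fin 2 → ℝ)) ∘ₗ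
        ((fderiv ℝ x ξ) : (Fin 2 → ℝ) →ₗ[ℝ] (Fin 2 → ℝ)) = LinearMap.id := by
      rw [← ContinuousLinearMap.toLinearMap_comp, h3]; rfl
    rw [h4, LinearMap.toMatrix'_id]
  have hjy : ∀ ξ ∈ Ωhat, jacMat y (x ξ) = (jacMat x ξ)⁻¹ := fun ξ hξ =>
    (Matrix.inv_eq_left_inv (hchain ξ hξ)).symm
  -- change of variables
  have hcov := integral_image_eq_integral_abs_det_fderiv_smul (volume : Measure (Fin 2 → ℝ))
    hΩhat_open.measurableSet
    (fun ξ hξ => ((hxd ξ hξ).hasFDerivAt).hasFDerivWithinAt)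
    hbij.injOn
    (fun p => ∑ i : Fin 2, ∑ j : Fin 2, (jacMat y p i j) ^ 2)
  rw [hbij.image_eq] at hcov
  have hdetCL : ∀ ξ ∈ Ωhat, (fderiv ℝ x ξ).det = (jacMat x ξ).det := by
    intro ξ hξ
    rw [jacMat_eq_toMatrix' (hxd ξ hξ), LinearMap.det_toMatrix']
  have key : ∀ ξ ∈ Ωhat,
      |(fderiv ℝ x ξ).det| • (∑ i : Fin 2, ∑ j : Fin 2, (jacMat y (x ξ) i j) ^ 2)
        = (metricG x ξ).trace / (jacMat x ξ).det := by
    intro ξ hξ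
    have hd := hdet ξ hξ
    rw [hdetCL ξ hξ, abs_of_pos hd, hjy ξ hξ, smul_eq_mul,
      matrix_sum_inv_sq hd.ne', metricG]
    field_simp
  have hfirst : (∫ p in Ω, ∑ i : Fin 2, ∑ j : Fin 2, (jacMat y p i j) ^ 2)
      = (∫ ξ in Ωhat, (metricG x ξ).trace / (jacMat x ξ).det) := by
    rw [hcov]
    exact setIntegral_congr_fun hΩhat_open.measurableSet (fun ξ hξ => key ξ hξ)
  refine ⟨hfirst, ?_⟩
  have hsecond : (∫ p in Ω, ((metricG x (y p))⁻¹).trace)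
      = (∫ p in Ω, ∑ i : Fin 2, ∑ j : Fin 2, (jacMat y p i j) ^ 2) := by
    apply setIntegral_congr_fun hΩ_open.measurableSet
    intro p hp
    obtain ⟨ξ, hξ, hxξ⟩ := hbij.surjOn hp
    have hyp : y p = ξ := by rw [← hxξ, hinv_left ξ hξ]
    have hd := hdet ξ hξ
    have h1 : jacMat y p = (jacMat x ξ)⁻¹ := by
      rw [← hxξ]; exact hjy ξ hξ
    simp only [metricG]
    rw [hyp, h1, matrix_trace_inv hd.ne', matrix_sum_inv_sq hd.ne']
  rw [hsecond, hfirst]
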